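/- Let P be a single-via path from s to t via v that is α-relative locally optimal little T = α·l(P). Let x_s' be the first vertex on P whose distance along P from s is at least α·l(P); define x_s = x_s' if the distance along P from s to x_s' is at most l(P)/2, and otherwise let x_s be the last vertex on P within distance l(P)/2 along P from s. Define x_t symmetrically from the destination side. Then there exists a vertex w on P such that the subpath of P from s to w is a shortest path with d(s,w) ≤ d_P(s, x_t), and the subpath of P from w to t is a shortest path with d(w,t) ≤ d_P(x_s, t), where d_P denotes distance along P. -/

import Mathlib

open List

variable {V : Type*}

/-- Length (cost) of a path given as a list of vertices, with edge weights `c`. -/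
def pLen (c : V → V → ℝ) : List V → ℝ
  | [] => 0
  | [_] => 0
  | a :: b :: rest => c a b + pLen c (b :: rest)

/-- The pInterior of a path: the path with its two endpoints removed. -/
def pInterior (p : List V) : List V := (p.drop 1).dropLast

/-- A (nonempty) path is a shortest path if its length equals the shortest-path
distance `d` between its endpoints. -/
def IsShortestPath [Inhabited V] (c d : V → V → ℝ) (p : List V) : Prop :=
  p ≠ [] ∧ pLen c p = d p.headI p.getLastI

/-- A path is `T`-locally optimal if every `T`-significant subpath (a nonempty
infix whose pInterior has length `< T`) is a shortest path. -/
def TLocOpt [Inhabited V] (c d : V → V → ℝ) (T : ℝ) (p : List V) : Prop :=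
  ∀ q : List V, q ≠ [] → q <:+: p → pLen c (pInterior q) < T → IsShortestPath c d q

lemma pLen_nil (c : V → V → ℝ) : pLen c [] = 0 := rfl
lemma pLen_single (c : V → V → ℝ) (a : V) : pLen c [a] = 0 := rfl
lemma pLen_cons2 (c : V → V → ℝ) (a b : V) (l : List V) :
    pLen c (a :: b :: l) = c a b + pLen c (b :: l) := rfl

lemma pLen_nonneg (c : V → V → ℝ) (hc : ∀ a b, 0 ≤ c a b) :
    ∀ l : List V, 0 ≤ pLen c l
  | [] => le_refl 0
  | [_] => le_refl 0
  | a :: b :: l => add_nonneg (hc a b) (pLen_nonneg c hc (b :: l))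

lemma pLen_append (c : V → V → ℝ) (x : V) (q2 : List V) :
    ∀ q1 : List V, pLen c (q1 ++ x :: q2) = pLen c (q1 ++ [x]) + pLen c (x :: q2)
  | [] => by simp [pLen_single]
  | [a] => by simp [pLen_cons2, pLen_single]
  | a :: b :: q1 => by
    have := pLen_append c x q2 (b :: q1)
    simp only [cons_append, pLen_cons2] at *
    rw [this]; ring

lemma pLen_tail_le (c : V → V → ℝ) (hc : ∀ a b, 0 ≤ c a b) :
    ∀ l : List V, pLen c l.tail ≤ pLen c l
  | [] => le_refl 0
  | [_] => by simp [pLen_nil, pLen_single]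
  | a :: b :: l => by
    simp only [tail_cons, pLen_cons2]
    nlinarith [hc a b]

lemma pLen_take_le (c : V → V → ℝ) (hc : ∀ a b, 0 ≤ c a b) :
    ∀ (l : List V) (n : ℕ), pLen c (l.take n) ≤ pLen c l
  | [], n => by simp
  | a :: t, 0 => by simpa [pLen_nil] using pLen_nonneg c hc (a :: t)
  | [a], n + 1 => by cases n <;> simp [pLen_single]
  | a :: b :: t, 1 => by
    simp only [take, pLen_single, pLen_cons2]
    have := pLen_nonneg c hc (b :: t)
    nlinarith [hc a b]
  | a :: b :: t, n + 2 => by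
    have := pLen_take_le c hc (b :: t) (n + 1)
    simp only [take, pLen_cons2] at *
    linarith

lemma pLen_drop_le (c : V → V → ℝ) (hc : ∀ a b, 0 ≤ c a b) (l : List V) :
    ∀ n : ℕ, pLen c (l.drop n) ≤ pLen c l := by
  intro n
  induction n with
  | zero => simp
  | succ m ih =>
    have h1 : l.drop (m + 1) = (l.drop m).tail := by
      rw [← List.drop_drop]; simp [List.drop_one]
    rw [h1]
    exact le_trans (pLen_tail_le c hc _) ih

lemma pLen_dropLast_le (c : V → V → ℝ) (hc : ∀ a b, 0 ≤ c a b) (l : List V) :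
    pLen c l.dropLast ≤ pLen c l := by
  rw [List.dropLast_eq_take]; exact pLen_take_le c hc l _

lemma pLen_take_add_drop (c : V → V → ℝ) (l : List V) (k : ℕ) (hk : k < l.length) :
    pLen c (l.take (k + 1)) + pLen c (l.drop k) = pLen c l := by
  have h1 : l.drop k = l.get ⟨k, hk⟩ :: l.drop (k + 1) := List.drop_eq_getElem_cons hk
  have h2 : l.take (k + 1) = l.take k ++ [l.get ⟨k, hk⟩] := by
    rw [List.take_succ, List.getElem?_eq_getElem hk]
    rfl
  conv_rhs => rw [← List.take_append_drop k l, h1]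
  rw [pLen_append, h1, h2]

lemma split_shortest [Inhabited V] (c d : V → V → ℝ)
    (hlow : ∀ p : List V, p ≠ [] → d p.headI p.getLastI ≤ pLen c p)
    (htri : ∀ a b e : V, d a e ≤ d a b + d b e)
    (q1 : List V) (x : V) (q2 : List V)
    (h : IsShortestPath c d (q1 ++ x :: q2)) :
    IsShortestPath c d (q1 ++ [x]) ∧ IsShortestPath c d (x :: q2) := by
  obtain ⟨-, heq⟩ := h
  have hh1 : (q1 ++ [x]).headI = (q1 ++ x :: q2).headI := by cases q1 <;> simp
  have hh2 : (q1 ++ [x]).getLastI = x := by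
    rw [List.getLastI_eq_getLast?, List.getLast?_concat]; rfl
  have hh4 : (x :: q2).getLastI = (q1 ++ x :: q2).getLastI := by
    rw [List.getLastI_eq_getLast?, List.getLastI_eq_getLast?,
      List.getLast?_append_cons]
  have la := hlow (q1 ++ [x]) (by simp)
  have lb := hlow (x :: q2) (by simp)
  have tr := htri (q1 ++ x :: q2).headI x (q1 ++ x :: q2).getLastI
  rw [hh1, hh2] at la
  have hh3 : (x :: q2).headI = x := rfl
  rw [hh3, hh4] at lb
  have hsum := pLen_append c x q2 q1
  refine ⟨⟨by simp, ?_⟩, ⟨by simp, ?_⟩⟩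
  · rw [hh1, hh2]; linarith
  · rw [hh3, hh4]; linarith

lemma split_shortest_idx [Inhabited V] (c d : V → V → ℝ)
    (hlow : ∀ p : List V, p ≠ [] → d p.headI p.getLastI ≤ pLen c p)
    (htri : ∀ a b e : V, d a e ≤ d a b + d b e)
    (p : List V) (hp : IsShortestPath c d p) (k : ℕ) (hk : k < p.length) :
    IsShortestPath c d (p.take (k + 1)) ∧ IsShortestPath c d (p.drop k) := by
  have h1 : p.drop k = p.get ⟨k, hk⟩ :: p.drop (k + 1) := List.drop_eq_getElem_cons hk
  have h2 : p.take (k + 1) = p.take k ++ [p.get ⟨k, hk⟩] := by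
    rw [List.take_succ, List.getElem?_eq_getElem hk]; rfl
  have hp' : IsShortestPath c d (p.take k ++ p.get ⟨k, hk⟩ :: p.drop (k + 1)) := by
    rwa [← h1, List.take_append_drop]
  have := split_shortest c d hlow htri _ _ _ hp'
  rw [← h2, ← h1] at this
  exact this

lemma interior_drop_le (c : V → V → ℝ) (hc : ∀ a b, 0 ≤ c a b) (P : List V) (m : ℕ) :
    pLen c (pInterior (P.drop m)) ≤ pLen c (P.drop (m + 1)) := by
  unfold pInterior
  rw [List.drop_drop]
  exact pLen_dropLast_le c hc _

lemma interior_take_le (c : V → V → ℝ) (hc : ∀ a b, 0 ≤ c a b) (P : List V)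
    (n : ℕ) (hn : n < P.length) :
    pLen c (pInterior (P.take (n + 1))) ≤ pLen c (P.take n) := by
  have h1 : pInterior (P.take (n + 1)) = (drop 1 P).take (n - 1) := by
    unfold pInterior
    rw [List.drop_take, List.dropLast_eq_take, List.length_take, List.length_drop,
      List.take_take]
    congr 1
    omega
  have h2 : (P.take n).drop 1 = (drop 1 P).take (n - 1) := List.drop_take
  rw [h1, ← h2, List.drop_one]
  exact pLen_tail_le c hc _

/-- For an `α`-relative locally optimal single-via path `P`,
with `x_s` and `x_t` defined via first-passage of the along-path distance
past `α·l(P)` (truncated at the midpoint), there is a vertex `w` on `P`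
(at index `k`) splitting `P` into two shortest paths with
`d_P(s,w) ≤ d_P(s,x_t)` and `d_P(w,t) ≤ d_P(x_s,t)`. -/
theorem stmt4 [Inhabited V] (c d : V → V → ℝ) (hc : ∀ a b, 0 ≤ c a b)
    (hlow : ∀ p : List V, p ≠ [] → d p.headI p.getLastI ≤ pLen c p)
    (htri : ∀ a b e : V, d a e ≤ d a b + d b e)
    (α : ℝ) (hα0 : 0 < α) (hα1 : α ≤ 1)
    (P : List V) (hPne : P ≠ [])
    -- along-path distance from `s` to the vertex at index `i`
    (D : ℕ → ℝ) (hD : ∀ i, D i = pLen c (P.take (i + 1)))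
    -- along-path distance from the vertex at index `i` to `t`
    (E : ℕ → ℝ) (hE : ∀ i, E i = pLen c (P.drop i))
    -- `P` is a single-via path: some vertex splits it into two shortest paths
    (hvia : ∃ k < P.length,
      IsShortestPath c d (P.take (k + 1)) ∧ IsShortestPath c d (P.drop k))
    -- `P` is α-relative locally optimal
    (hRLO : TLocOpt c d (α * pLen c P) P)
    -- `x_s'` (index `is'`): first vertex with along-path distance ≥ α·l(P)
    (is' : ℕ) (his'lt : is' < P.length) (his'1 : α * pLen c P ≤ D is')
    (his'2 : ∀ j < is', D j < α * pLen c P)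
    -- `x_s` (index `ixs`)
    (ixs : ℕ)
    (hxs : (D is' ≤ pLen c P / 2 ∧ ixs = is') ∨
           (pLen c P / 2 < D is' ∧ ixs < P.length ∧ D ixs ≤ pLen c P / 2 ∧
             ∀ j < P.length, D j ≤ pLen c P / 2 → j ≤ ixs))
    -- `x_t'` (index `it'`): last vertex with distance to `t` ≥ α·l(P)
    (it' : ℕ) (hit'lt : it' < P.length) (hit'1 : α * pLen c P ≤ E it')
    (hit'2 : ∀ j, it' < j → j < P.length → E j < α * pLen c P)
    -- `x_t` (index `ixt`)
    (ixt : ℕ)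
    (hxt : (E it' ≤ pLen c P / 2 ∧ ixt = it') ∨
           (pLen c P / 2 < E it' ∧ ixt < P.length ∧ E ixt ≤ pLen c P / 2 ∧
             ∀ j < P.length, E j ≤ pLen c P / 2 → ixt ≤ j)) :
    ∃ k < P.length,
      IsShortestPath c d (P.take (k + 1)) ∧ IsShortestPath c d (P.drop k) ∧
      D k ≤ D ixt ∧ E k ≤ E ixs := by
  obtain ⟨k0, hk0lt, hk0a, hk0b⟩ := hvia
  have hDnn : ∀ i, 0 ≤ D i := fun i => by rw [hD]; exact pLen_nonneg c hc _
  have hEnn : ∀ i, 0 ≤ E i := fun i => by rw [hE]; exact pLen_nonneg c hc _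
  by_cases hl : 0 < pLen c P
  case neg =>
    -- degenerate case: `pLen c P = 0`
    have hl0 : pLen c P = 0 := le_antisymm (not_lt.1 hl) (pLen_nonneg c hc P)
    refine ⟨k0, hk0lt, hk0a, hk0b, ?_, ?_⟩
    · have : D k0 ≤ pLen c P := by rw [hD]; exact pLen_take_le c hc P _
      linarith [hDnn ixt]
    · have : E k0 ≤ pLen c P := by rw [hE]; exact pLen_drop_le c hc P _
      linarith [hEnn ixs]
  case pos =>
  have hT : 0 < α * pLen c P := mul_pos hα0 hl
  have hid : ∀ i < P.length, D i + E i = pLen c P := by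
    intro i hi; rw [hD, hE]; exact pLen_take_add_drop c P i hi
  have hDmono : ∀ i j : ℕ, i ≤ j → D i ≤ D j := by
    intro i j hij
    rw [hD, hD]
    have h : P.take (i + 1) = (P.take (j + 1)).take (i + 1) := by
      rw [List.take_take]; congr 1; omega
    rw [h]
    exact pLen_take_le c hc _ _
  have hEmono : ∀ i j : ℕ, i ≤ j → E j ≤ E i := by
    intro i j hij
    rw [hE, hE]
    have h : P.drop j = (P.drop i).drop (j - i) := by
      rw [List.drop_drop]; congr 1; omega
    rw [h]
    exact pLen_drop_le c hc _ _
  have hxs_half : D ixs ≤ pLen c P / 2 := by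
    rcases hxs with ⟨h1, h2⟩ | ⟨_, _, h3, _⟩
    · rw [h2]; exact h1
    · exact h3
  have hxs_lt : ixs < P.length := by
    rcases hxs with ⟨_, h2⟩ | ⟨_, h2, _, _⟩
    · rw [h2]; exact his'lt
    · exact h2
  have hixs_le : ixs ≤ is' := by
    rcases hxs with ⟨_, h2⟩ | ⟨h1, _, h3, _⟩
    · omega
    · by_contra h
      push_neg at h
      have := hDmono is' ixs h.le
      linarith
  have hxt_half : E ixt ≤ pLen c P / 2 := by
    rcases hxt with ⟨h1, h2⟩ | ⟨_, _, h3, _⟩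
    · rw [h2]; exact h1
    · exact h3
  have hxt_lt : ixt < P.length := by
    rcases hxt with ⟨_, h2⟩ | ⟨_, h2, _, _⟩
    · rw [h2]; exact hit'lt
    · exact h2
  have hit_le : it' ≤ ixt := by
    rcases hxt with ⟨_, h2⟩ | ⟨h1, _, h3, _⟩
    · omega
    · by_contra h
      push_neg at h
      have := hEmono ixt it' h.le
      linarith
  have hDixt : pLen c P / 2 ≤ D ixt := by
    have := hid ixt hxt_lt; linarith
  have hExs : pLen c P / 2 ≤ E ixs := by
    have := hid ixs hxs_lt; linarith
  -- the prefix ending at `x_s` is shortest (by local optimality)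
  have prefix_ixs : IsShortestPath c d (P.take (ixs + 1)) := by
    apply hRLO _ (by simp [List.take_eq_nil_iff, hPne]) (List.take_prefix _ _).isInfix
    have hb := interior_take_le c hc P ixs hxs_lt
    rcases Nat.eq_zero_or_pos ixs with h0 | h0
    · subst h0
      simpa [pLen_nil] using lt_of_le_of_lt hb hT
    · have : pLen c (P.take ixs) = D (ixs - 1) := by
        rw [hD]; congr 2; omega
      rw [this] at hb
      exact lt_of_le_of_lt hb (his'2 _ (by omega))
  -- the suffix starting at `x_t` is shortest (by local optimality)
  have suffix_ixt : IsShortestPath c d (P.drop ixt) := by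
    apply hRLO _ (by simp [List.drop_eq_nil_iff]; omega) (List.drop_suffix _ _).isInfix
    have hb := interior_drop_le c hc P ixt
    have hb' : pLen c (P.drop (ixt + 1)) < α * pLen c P := by
      by_cases hcase : ixt + 1 < P.length
      · have := hit'2 (ixt + 1) (by omega) hcase
        rwa [hE] at this
      · have : P.drop (ixt + 1) = [] := List.drop_eq_nil_iff.2 (by omega)
        rw [this, pLen_nil]; exact hT
    exact lt_of_le_of_lt hb hb'
  rcases lt_or_ge (D k0) (D ixs) with h1 | h1
  · -- via vertex is before `x_s`: use `x_s` as the split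
    have hk0ixs : k0 < ixs := by
      by_contra h
      push_neg at h
      exact absurd (hDmono ixs k0 h) (not_le.2 h1)
    have hdropixs : IsShortestPath c d (P.drop ixs) := by
      have hlen : ixs - k0 < (P.drop k0).length := by rw [List.length_drop]; omega
      have := (split_shortest_idx c d hlow htri _ hk0b (ixs - k0) hlen).2
      rwa [List.drop_drop, (by omega : k0 + (ixs - k0) = ixs)] at this
    exact ⟨ixs, hxs_lt, prefix_ixs, hdropixs, by linarith, le_refl _⟩
  · rcases le_or_gt (D k0) (D ixt) with h2 | h2
    · -- via vertex is between `x_s` and `x_t`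
      refine ⟨k0, hk0lt, hk0a, hk0b, h2, ?_⟩
      have := hid k0 hk0lt
      have := hid ixs hxs_lt
      linarith
    · -- via vertex is after `x_t`: use `x_t` as the split
      have hixtk0 : ixt < k0 := by
        by_contra h
        push_neg at h
        exact absurd (hDmono k0 ixt h) (not_le.2 h2)
      have htakeixt : IsShortestPath c d (P.take (ixt + 1)) := by
        have hlen : ixt < (P.take (k0 + 1)).length := by
          rw [List.length_take]; omega
        have := (split_shortest_idx c d hlow htri _ hk0a ixt hlen).1
        rwa [List.take_take, (by omega : (ixt + 1) ⊓ (k0 + 1) = ixt + 1)] at this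
      exact ⟨ixt, hxt_lt, htakeixt, suffix_ixt, le_refl _, by linarith⟩
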